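/- For natural numbers m₁, m₂ with m₁ ≡ i-1 mod 4 and m₂ ≡ j-1 mod 4 (1 ≤ i,j ≤ 4), the double sum H₄(m₁,m₂) = Σ_{p₁=m₂}^{m₁+m₂} Σ_{p₂=0}^{m₂} C₄(p₁,p₂) equals the (i,j)-entry of the 4×4 matrix with rows (1,1,0,0), (1,0,-1,0), (0,-1,-1,0), (0,0,0,0). -/
import Mathlib

def C4 (p₁ p₂ : ℕ) : ℤ := ![1, 0, -1, 0] ⟨(p₁ - p₂) % 4, by omega⟩

def M4 : Fin 4 → Fin 4 → ℤ :=
  ![![1, 1, 0, 0],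
    ![1, 0, -1, 0],
    ![0, -1, -1, 0],
    ![0, 0, 0, 0]]

/-- Abbreviation for the double sum. -/
def S4 (m₁ m₂ : ℕ) : ℤ := ∑ p₁ ∈ Finset.Icc m₂ (m₁ + m₂), ∑ p₂ ∈ Finset.Icc 0 m₂, C4 p₁ p₂

lemma C4_mod (p₁ p₂ : ℕ) :
    C4 p₁ p₂ = if (p₁ - p₂) % 4 = 0 then 1 else if (p₁ - p₂) % 4 = 2 then -1 else 0 := by
  have h : (p₁-p₂)%4 = 0 ∨ (p₁-p₂)%4 = 1 ∨ (p₁-p₂)%4 = 2 ∨ (p₁-p₂)%4 = 3 := by omega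
  rcases h with h | h | h | h <;> · rw [C4]; simp only [h]; rfl

lemma c4_four (a p₂ : ℕ) (h : p₂ ≤ a) :
    C4 a p₂ + C4 (a+1) p₂ + C4 (a+2) p₂ + C4 (a+3) p₂ = 0 := by
  simp only [C4_mod]
  split_ifs <;> omega

lemma c4_four' (p₁ m₂ : ℕ) (h : m₂ ≤ p₁) :
    C4 (p₁+4) (m₂+1) + C4 (p₁+4) (m₂+2) + C4 (p₁+4) (m₂+3) + C4 (p₁+4) (m₂+4) = 0 := by
  simp only [C4_mod]
  split_ifs <;> omega

lemma lemA (m₁ m₂ : ℕ) : S4 (m₁ + 4) m₂ = S4 m₁ m₂ := by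
  have h1 : m₂ ≤ m₁ + m₂ + 1 := by omega
  have h2 : m₂ ≤ m₁ + m₂ + 2 := by omega
  have h3 : m₂ ≤ m₁ + m₂ + 3 := by omega
  have h4 : m₂ ≤ m₁ + m₂ + 4 := by omega
  have e : m₁ + 4 + m₂ = m₁ + m₂ + 4 := by omega
  rw [S4, e, show m₁ + m₂ + 4 = (m₁ + m₂ + 3) + 1 from rfl,
    Finset.sum_Icc_succ_top h4, show m₁ + m₂ + 3 = (m₁ + m₂ + 2) + 1 from rfl,
    Finset.sum_Icc_succ_top h3, show m₁ + m₂ + 2 = (m₁ + m₂ + 1) + 1 from rfl,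
    Finset.sum_Icc_succ_top h2, show m₁ + m₂ + 1 = (m₁ + m₂) + 1 from rfl,
    Finset.sum_Icc_succ_top h1]
  have hz : (∑ p₂ ∈ Finset.Icc 0 m₂, C4 (m₁ + m₂ + 1) p₂)
      + ((∑ p₂ ∈ Finset.Icc 0 m₂, C4 (m₁ + m₂ + 2) p₂)
      + ((∑ p₂ ∈ Finset.Icc 0 m₂, C4 (m₁ + m₂ + 3) p₂)
      + (∑ p₂ ∈ Finset.Icc 0 m₂, C4 (m₁ + m₂ + 4) p₂))) = 0 := by
    rw [← Finset.sum_add_distrib, ← Finset.sum_add_distrib, ← Finset.sum_add_distrib]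
    apply Finset.sum_eq_zero
    intro p₂ hp₂
    have hp : p₂ ≤ m₂ := by simpa using (Finset.mem_Icc.mp hp₂).2
    have h := c4_four (m₁ + m₂ + 1) p₂ (by omega)
    have e2 : m₁ + m₂ + 1 + 1 = m₁ + m₂ + 2 := by omega
    have e3 : m₁ + m₂ + 1 + 2 = m₁ + m₂ + 3 := by omega
    have e4 : m₁ + m₂ + 1 + 3 = m₁ + m₂ + 4 := by omega
    rw [e2, e3, e4] at h
    linarith
  rw [S4]
  linarith

lemma lemB (m₁ m₂ : ℕ) : S4 m₁ (m₂ + 4) = S4 m₁ m₂ := by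
  rw [S4, S4]
  have emap : Finset.Icc (m₂ + 4) (m₁ + (m₂ + 4)) =
      (Finset.Icc m₂ (m₁ + m₂)).map (addRightEmbedding 4) := by
    have e : m₁ + (m₂ + 4) = (m₁ + m₂) + 4 := by omega
    rw [e, Finset.map_add_right_Icc]
  rw [emap, Finset.sum_map]
  apply Finset.sum_congr rfl
  intro p₁ hp₁
  have hp : m₂ ≤ p₁ := (Finset.mem_Icc.mp hp₁).1
  simp only [addRightEmbedding, Function.Embedding.coeFn_mk]
  have h1 : (0:ℕ) ≤ m₂ + 1 := by omega
  have h2 : (0:ℕ) ≤ m₂ + 2 := by omega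
  have h3 : (0:ℕ) ≤ m₂ + 3 := by omega
  have h4 : (0:ℕ) ≤ m₂ + 4 := by omega
  rw [show m₂ + 4 = (m₂ + 3) + 1 from rfl, Finset.sum_Icc_succ_top h4,
    show m₂ + 3 = (m₂ + 2) + 1 from rfl, Finset.sum_Icc_succ_top h3,
    show m₂ + 2 = (m₂ + 1) + 1 from rfl, Finset.sum_Icc_succ_top h2,
    Finset.sum_Icc_succ_top h1]
  have hmain : (∑ p₂ ∈ Finset.Icc 0 m₂, C4 (p₁ + 4) p₂) = ∑ p₂ ∈ Finset.Icc 0 m₂, C4 p₁ p₂ := by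
    apply Finset.sum_congr rfl
    intro p₂ hp₂
    have hpp : p₂ ≤ m₂ := by simpa using (Finset.mem_Icc.mp hp₂).2
    simp only [C4_mod]
    have e : (p₁ + 4 - p₂) % 4 = (p₁ - p₂) % 4 := by omega
    rw [e]
  have htail := c4_four' p₁ m₂ hp
  rw [hmain]
  linarith

lemma redA (k m₁ m₂ : ℕ) : S4 (m₁ + 4 * k) m₂ = S4 m₁ m₂ := by
  induction k with
  | zero => rfl
  | succ n ih =>
    have e : m₁ + 4 * (n + 1) = (m₁ + 4 * n) + 4 := by omega
    rw [e, lemA, ih]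

lemma redB (k m₁ m₂ : ℕ) : S4 m₁ (m₂ + 4 * k) = S4 m₁ m₂ := by
  induction k with
  | zero => rfl
  | succ n ih =>
    have e : m₂ + 4 * (n + 1) = (m₂ + 4 * n) + 4 := by omega
    rw [e, lemB, ih]

lemma base : ∀ i j : Fin 4, S4 i.val j.val = M4 i j := by decide

theorem stmt13 (m₁ m₂ : ℕ) :
    (∑ p₁ ∈ Finset.Icc m₂ (m₁ + m₂), ∑ p₂ ∈ Finset.Icc 0 m₂, C4 p₁ p₂) =
      M4 ⟨m₁ % 4, by omega⟩ ⟨m₂ % 4, by omega⟩ := by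
  have key : S4 m₁ m₂ = S4 (m₁ % 4) (m₂ % 4) := by
    conv_lhs => rw [show m₁ = m₁ % 4 + 4 * (m₁ / 4) from by omega,
      show m₂ = m₂ % 4 + 4 * (m₂ / 4) from by omega]
    rw [redA, redB]
  show S4 m₁ m₂ = _
  rw [key]
  exact base ⟨m₁ % 4, by omega⟩ ⟨m₂ % 4, by omega⟩
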